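/- Let X be a hyponormal bounded operator on a Hilbert space (i.e., X·X* ≤ X*·X). Then ‖X^n‖ = ‖X‖^n for all n ≥ 1, and consequently the spectral radius r(X) equals ‖X‖. -/

import Mathlib

open ContinuousLinearMap

theorem stmt_16 {H : Type*} [NormedAddCommGroup H] [InnerProductSpace ℂ H] [CompleteSpace H]
    (X : H →L[ℂ] H) (hX : (adjoint X * X - X * adjoint X).IsPositive) :
    (∀ n : ℕ, 1 ≤ n → ‖X ^ n‖ = ‖X‖ ^ n) ∧ spectralRadius ℂ X = (‖X‖₊ : ENNReal) := by
  have hadj : ∀ v : H, ‖adjoint X v‖ ≤ ‖X v‖ := by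
    intro v
    have h0 := hX.2 v
    simp only [reApplyInnerSelf_apply, sub_apply, ContinuousLinearMap.mul_apply, inner_sub_left] at h0
    have e1 : (inner ℂ ((adjoint X) (X v)) v : ℂ) = inner ℂ (X v) (X v) :=
      adjoint_inner_left X v (X v)
    have e2 : (inner ℂ (X ((adjoint X) v)) v : ℂ) = inner ℂ ((adjoint X) v) ((adjoint X) v) :=
      (adjoint_inner_right X ((adjoint X) v) v).symm
    rw [e1, e2, map_sub, inner_self_eq_norm_sq (𝕜 := ℂ), inner_self_eq_norm_sq (𝕜 := ℂ)] at h0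
    nlinarith [norm_nonneg (adjoint X v), norm_nonneg (X v)]
  have key : ∀ v : H, ‖X v‖ ^ 2 ≤ ‖X (X v)‖ * ‖v‖ := by
    intro v
    have h1 : (‖X v‖ : ℝ) ^ 2 = RCLike.re (inner ℂ (adjoint X (X v)) v : ℂ) := by
      rw [adjoint_inner_left, inner_self_eq_norm_sq (𝕜 := ℂ)]
    rw [h1]
    calc RCLike.re (inner ℂ (adjoint X (X v)) v : ℂ) ≤ ‖(inner ℂ (adjoint X (X v)) v : ℂ)‖ :=
          RCLike.re_le_norm _
      _ ≤ ‖adjoint X (X v)‖ * ‖v‖ := norm_inner_le_norm _ _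
      _ ≤ ‖X (X v)‖ * ‖v‖ := by
          exact mul_le_mul_of_nonneg_right (hadj _) (norm_nonneg v)
  have keyop : ∀ n : ℕ, ‖X ^ (n + 1)‖ ^ 2 ≤ ‖X ^ (n + 2)‖ * ‖X ^ n‖ := by
    intro n
    have hC : (0:ℝ) ≤ ‖X ^ (n + 2)‖ * ‖X ^ n‖ :=
      mul_nonneg (norm_nonneg _) (norm_nonneg _)
    have hb : ‖X ^ (n+1)‖ ≤ Real.sqrt (‖X ^ (n + 2)‖ * ‖X ^ n‖) := by
      apply opNorm_le_bound _ (Real.sqrt_nonneg _)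
      intro v
      have hp : ‖(X ^ (n+1)) v‖ ^ 2 ≤ (‖X ^ (n + 2)‖ * ‖X ^ n‖) * ‖v‖ ^ 2 := by
        have e1 : (X ^ (n+1)) v = X ((X ^ n) v) := by
          rw [pow_succ']; rfl
        have e2 : X (X ((X ^ n) v)) = (X ^ (n+2)) v := by
          rw [show n + 2 = n + 1 + 1 from rfl, pow_succ', pow_succ']; rfl
        calc ‖(X ^ (n+1)) v‖ ^ 2 = ‖X ((X ^ n) v)‖ ^ 2 := by rw [e1]
          _ ≤ ‖X (X ((X ^ n) v))‖ * ‖(X ^ n) v‖ := key _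
          _ = ‖(X ^ (n+2)) v‖ * ‖(X ^ n) v‖ := by rw [e2]
          _ ≤ (‖X ^ (n+2)‖ * ‖v‖) * (‖X ^ n‖ * ‖v‖) :=
              mul_le_mul (le_opNorm _ _) (le_opNorm _ _) (norm_nonneg _)
                (mul_nonneg (norm_nonneg _) (norm_nonneg _))
          _ = (‖X ^ (n + 2)‖ * ‖X ^ n‖) * ‖v‖ ^ 2 := by ring
      calc ‖(X ^ (n+1)) v‖ = Real.sqrt (‖(X ^ (n+1)) v‖ ^ 2) := by
            rw [Real.sqrt_sq (norm_nonneg _)]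
        _ ≤ Real.sqrt ((‖X ^ (n + 2)‖ * ‖X ^ n‖) * ‖v‖ ^ 2) := Real.sqrt_le_sqrt hp
        _ = Real.sqrt (‖X ^ (n + 2)‖ * ‖X ^ n‖) * ‖v‖ := by
            rw [Real.sqrt_mul hC, Real.sqrt_sq (norm_nonneg _)]
    calc ‖X ^ (n+1)‖ ^ 2 ≤ Real.sqrt (‖X ^ (n + 2)‖ * ‖X ^ n‖) ^ 2 := by
          exact pow_le_pow_left₀ (norm_nonneg _) hb 2
      _ = ‖X ^ (n + 2)‖ * ‖X ^ n‖ := Real.sq_sqrt hC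
  have main : ∀ n : ℕ, 1 ≤ n → ‖X ^ n‖ = ‖X‖ ^ n := by
    intro n
    induction n using Nat.strong_induction_on with
    | _ n ih =>
      match n with
      | 0 => intro h; omega
      | 1 => intro _; simp
      | (m + 2) =>
        intro _
        rcases eq_or_ne ‖X‖ 0 with h0 | h0
        · have hX0 : X = 0 := norm_eq_zero.mp h0
          rw [hX0]
          simp [zero_pow (by omega : m + 2 ≠ 0)]
        · have hnt : Nontrivial H := by
            by_contra hc
            rw [not_nontrivial_iff_subsingleton] at hc
            exact h0 (by rw [Subsingleton.elim X 0]; simp)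
          have h00 : ‖X ^ 0‖ = ‖X‖ ^ 0 := by
            rw [pow_zero, pow_zero]; exact norm_one
          have ihm : ‖X ^ m‖ = ‖X‖ ^ m := by
            rcases Nat.eq_zero_or_pos m with hm | hm
            · rw [hm]; exact h00
            · exact ih m (by omega) hm
          have hle : ‖X ^ (m + 2)‖ ≤ ‖X‖ ^ (m + 2) := norm_pow_le' X (by omega)
          have hge : ‖X‖ ^ (m + 2) ≤ ‖X ^ (m + 2)‖ := by
            have h1 := keyop m
            rw [ih (m+1) (by omega) (by omega), ihm] at h1
            have hXn : (0:ℝ) < ‖X‖ ^ m := pow_pos (lt_of_le_of_ne (norm_nonneg _) (Ne.symm h0)) m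
            have h2 : ‖X‖ ^ (m + 2) * ‖X‖ ^ m ≤ ‖X ^ (m + 2)‖ * ‖X‖ ^ m := by
              calc ‖X‖ ^ (m + 2) * ‖X‖ ^ m = (‖X‖ ^ (m+1)) ^ 2 := by ring
                _ ≤ ‖X ^ (m + 2)‖ * ‖X‖ ^ m := h1
            exact le_of_mul_le_mul_right h2 hXn
          linarith
  refine ⟨main, ?_⟩
  have htend := spectrum.pow_nnnorm_pow_one_div_tendsto_nhds_spectralRadius X
  have heq : ∀ᶠ n : ℕ in Filter.atTop,
      ((‖X ^ n‖₊ : ENNReal) ^ (1 / n : ℝ)) = (‖X‖₊ : ENNReal) := by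
    filter_upwards [Filter.eventually_ge_atTop 1] with n hn
    have : (‖X ^ n‖₊ : ENNReal) = (‖X‖₊ : ENNReal) ^ n := by
      have := main n hn
      rw [← coe_nnnorm, ← coe_nnnorm] at this
      norm_cast
      exact_mod_cast this
    rw [this, ← ENNReal.rpow_natCast, ← ENNReal.rpow_mul]
    rw [mul_one_div, div_self (Nat.cast_ne_zero.mpr (by omega) : (n:ℝ) ≠ 0), ENNReal.rpow_one]
  exact tendsto_nhds_unique ((Filter.tendsto_congr' heq).mp htend) tendsto_const_nhds
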